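/- Every vector w in the subspace S²_{r,s}(V) is fixed by the Benkart–Witherspoon R-matrix: R w = w. -/

import Mathlib

open Matrix Kronecker BigOperators

/-- The `n × n` matrix unit `E i j` over `ℂ`. -/
noncomputable def E (n : ℕ) (i j : Fin n) : Matrix (Fin n) (Fin n) ℂ :=
  Matrix.single i j 1

/-- The Benkart–Witherspoon R-matrix on `V ⊗ V`. -/
noncomputable def BWR (n : ℕ) (r s : ℂ) : Matrix (Fin n × Fin n) (Fin n × Fin n) ℂ :=
  (∑ i : Fin n, E n i i ⊗ₖ E n i i)
  + r • (∑ i : Fin n, ∑ j : Fin n, if i < j then E n j i ⊗ₖ E n i j else 0)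
  + s⁻¹ • (∑ i : Fin n, ∑ j : Fin n, if i < j then E n i j ⊗ₖ E n j i else 0)
  + (1 - r * s⁻¹) • (∑ i : Fin n, ∑ j : Fin n, if i < j then E n j j ⊗ₖ E n i i else 0)

/-- The `(r,s)`-symmetric square `S²_{r,s}(V) ⊆ V ⊗ V`, with `V ⊗ V` modelled as
`Fin n × Fin n → ℂ` and `v_i ⊗ v_j = Pi.single (i, j) 1`. -/
noncomputable def Ssub (n : ℕ) (s : ℂ) : Submodule ℂ (Fin n × Fin n → ℂ) :=
  Submodule.span ℂ ({ f | ∃ i : Fin n, f = (Pi.single (i, i) 1 : Fin n × Fin n → ℂ) } ∪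
    { f | ∃ i j : Fin n, i < j ∧
      f = (Pi.single (i, j) 1 : Fin n × Fin n → ℂ) + s • (Pi.single (j, i) 1 : Fin n × Fin n → ℂ) })

lemma ite_mat_apply {α β : Type*} (c : Prop) [Decidable c] (A : Matrix α β ℂ) (i : α) (j : β) :
    (if c then A else 0) i j = if c then A i j else 0 := by
  split <;> simp

lemma sum1 (n : ℕ) (x y p q : Fin n) :
    (∑ i : Fin n, ∑ j : Fin n, if i < j then
        if i = y then if j = q then if j = x then if i = p then (1:ℂ) else 0 else 0 else 0 else 0
      else 0)
    = if y = p ∧ x = q ∧ y < x then 1 else 0 := by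
  rw [Fintype.sum_eq_single y (fun b hb => Finset.sum_eq_zero fun j _ => by
    split_ifs <;> simp_all)]
  rw [Fintype.sum_eq_single x (fun b hb => by split_ifs <;> simp_all)]
  split_ifs <;> simp_all <;> omega

lemma sum2 (n : ℕ) (x y p q : Fin n) :
    (∑ i : Fin n, ∑ j : Fin n, if i < j then
        if j = y then if i = q then if i = x then if j = p then (1:ℂ) else 0 else 0 else 0 else 0
      else 0)
    = if y = p ∧ x = q ∧ x < y then 1 else 0 := by
  rw [Fintype.sum_eq_single x (fun b hb => Finset.sum_eq_zero fun j _ => by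
    split_ifs <;> simp_all)]
  rw [Fintype.sum_eq_single y (fun b hb => by split_ifs <;> simp_all)]
  split_ifs <;> simp_all <;> omega

lemma sum3 (n : ℕ) (x y p q : Fin n) :
    (∑ i : Fin n, ∑ j : Fin n, if i < j then
        if i = y then if i = q then if j = x then if j = p then (1:ℂ) else 0 else 0 else 0 else 0
      else 0)
    = if x = p ∧ y = q ∧ y < x then 1 else 0 := by
  rw [Fintype.sum_eq_single y (fun b hb => Finset.sum_eq_zero fun j _ => by
    split_ifs <;> simp_all)]
  rw [Fintype.sum_eq_single x (fun b hb => by split_ifs <;> simp_all)]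
  split_ifs <;> simp_all <;> omega

set_option maxHeartbeats 1000000 in
lemma BWR_apply (n : ℕ) (r s : ℂ) (x y p q : Fin n) :
    BWR n r s (x, y) (p, q) =
      (if x = p ∧ y = q ∧ x = y then 1 else 0)
      + r * (if y = p ∧ x = q ∧ y < x then 1 else 0)
      + s⁻¹ * (if y = p ∧ x = q ∧ x < y then 1 else 0)
      + (1 - r * s⁻¹) * (if x = p ∧ y = q ∧ y < x then 1 else 0) := by
  simp only [BWR, E, Matrix.add_apply, Matrix.smul_apply, Matrix.sum_apply, ite_mat_apply,
    Matrix.kroneckerMap_apply, Matrix.single, Matrix.of_apply,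
    mul_ite, ite_mul, mul_one, mul_zero, zero_mul, one_mul,
    ite_and, smul_eq_mul, Finset.sum_ite_eq, Finset.sum_ite_eq', Finset.mem_univ, if_true]
  have h1 : (if y = q then if y = x then if y = p then (1:ℂ) else 0 else 0 else 0)
      = if x = p ∧ y = q ∧ x = y then 1 else 0 := by
    split_ifs <;> simp_all <;> omega
  rw [sum1, sum2, sum3, h1]
  simp only [ite_and, mul_ite, mul_one, mul_zero]

/-- Every vector of `S²_{r,s}(V)` is fixed by the Benkart–Witherspoon R-matrix. -/
theorem stmt7 (n : ℕ) (hn : 2 ≤ n) (r s : ℂ) (hr : r ≠ 0) (hs : s ≠ 0) (hrs : r ≠ s) :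
    ∀ w ∈ Ssub n s, (BWR n r s).mulVec w = w := by
  intro w hw
  induction hw using Submodule.span_induction with
  | zero => simp
  | add a b _ _ ha hb => rw [Matrix.mulVec_add, ha, hb]
  | smul c a _ ha => rw [Matrix.mulVec_smul, ha]
  | mem f hf =>
    rcases hf with ⟨i, rfl⟩ | ⟨i, j, hij, rfl⟩
    · funext v
      obtain ⟨x, y⟩ := v
      simp only [Matrix.mulVec_single_one, Matrix.col_apply, mul_one]
      rw [BWR_apply]
      have c1 : (x = i ∧ y = i ∧ x = y) ↔ (x = i ∧ y = i) := by
        constructor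
        · rintro ⟨h1, h2, _⟩; exact ⟨h1, h2⟩
        · rintro ⟨rfl, rfl⟩; exact ⟨rfl, rfl, rfl⟩
      have c2 : ¬(y = i ∧ x = i ∧ y < x) := by
        rintro ⟨rfl, rfl, h⟩; exact lt_irrefl _ h
      have c3 : ¬(y = i ∧ x = i ∧ x < y) := by
        rintro ⟨rfl, rfl, h⟩; exact lt_irrefl _ h
      have c4 : ¬(x = i ∧ y = i ∧ y < x) := by
        rintro ⟨rfl, rfl, h⟩; exact lt_irrefl _ h
      rw [if_neg c2, if_neg c3, if_neg c4]
      simp only [c1, Pi.single_apply, Prod.mk.injEq, mul_zero, add_zero]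
    · funext v
      obtain ⟨x, y⟩ := v
      simp only [Matrix.mulVec_add, Matrix.mulVec_smul, Matrix.mulVec_single_one, Matrix.col_apply, mul_one,
        Pi.add_apply, Pi.smul_apply, smul_eq_mul]
      rw [BWR_apply, BWR_apply]
      have hne : i ≠ j := ne_of_lt hij
      have h1 : ¬(x = i ∧ y = j ∧ x = y) := by
        rintro ⟨rfl, rfl, h⟩; exact hne h
      have h2 : (y = i ∧ x = j ∧ y < x) ↔ (x = j ∧ y = i) := by
        constructor
        · rintro ⟨h1, h2, _⟩; exact ⟨h2, h1⟩
        · rintro ⟨rfl, rfl⟩; exact ⟨rfl, rfl, hij⟩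
      have h3 : ¬(y = i ∧ x = j ∧ x < y) := by
        rintro ⟨rfl, rfl, h⟩; exact lt_asymm hij h
      have h4 : ¬(x = i ∧ y = j ∧ y < x) := by
        rintro ⟨rfl, rfl, h⟩; exact lt_asymm hij h
      have h5 : ¬(x = j ∧ y = i ∧ x = y) := by
        rintro ⟨rfl, rfl, h⟩; exact hne h.symm
      have h6 : ¬(y = j ∧ x = i ∧ y < x) := by
        rintro ⟨rfl, rfl, h⟩; exact lt_asymm hij h
      have h7 : (y = j ∧ x = i ∧ x < y) ↔ (x = i ∧ y = j) := by
        constructor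
        · rintro ⟨h1, h2, _⟩; exact ⟨h2, h1⟩
        · rintro ⟨rfl, rfl⟩; exact ⟨rfl, rfl, hij⟩
      have h8 : (x = j ∧ y = i ∧ y < x) ↔ (x = j ∧ y = i) := by
        constructor
        · rintro ⟨h1, h2, _⟩; exact ⟨h1, h2⟩
        · rintro ⟨rfl, rfl⟩; exact ⟨rfl, rfl, hij⟩
      rw [if_neg h1, if_neg h3, if_neg h4, if_neg h5, if_neg h6]
      simp only [h2, h7, h8, Pi.single_apply, Prod.mk.injEq]
      by_cases hxy1 : x = i ∧ y = j <;> by_cases hxy2 : x = j ∧ y = i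
      · exact absurd (hxy1.1 ▸ hxy2.1 ▸ rfl : i = j) hne
      · simp only [if_pos hxy1, if_neg hxy2, mul_zero, mul_one, add_zero, zero_add, mul_zero]
        field_simp
      · simp only [if_neg hxy1, if_pos hxy2, mul_zero, mul_one, add_zero, zero_add]
        field_simp
        try ring
      · simp [hxy2, hxy1]
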